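/- Consider the linear program: maximize y subject to y ≤ 4/3 + (1/3)·x, y ≤ 1 − (1/6)·γ + x, y ≤ (8ρ+6)/9 + ((4ρ−3)/9)·γ − ((4ρ−2)/3)·x, and 0 ≤ x ≤ γ ≤ 1, where ρ ≥ 1 is a fixed parameter. The optimal value equals 11/6 − 5/(2(4ρ+1)) if ρ ≤ 9/4, and 5/3 − 2/(3(4ρ−1)) if ρ > 9/4. -/

import Mathlib

/-- the value of the LP
`max y s.t. y ≤ 4/3 + x/3, y ≤ 1 − γ/6 + x, y ≤ (8ρ+6)/9 + ((4ρ−3)/9)γ − ((4ρ−2)/3)x,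
0 ≤ x ≤ γ ≤ 1` equals `11/6 − 5/(2(4ρ+1))` if `ρ ≤ 9/4` and `5/3 − 2/(3(4ρ−1))`
otherwise (for any fixed parameter `ρ ≥ 1`). -/
theorem stmt_11 (ρ : ℝ) (hρ : 1 ≤ ρ) :
    IsGreatest {y : ℝ | ∃ x γ : ℝ, 0 ≤ x ∧ x ≤ γ ∧ γ ≤ 1 ∧
        y ≤ 4 / 3 + x / 3 ∧ y ≤ 1 - γ / 6 + x ∧
        y ≤ (8 * ρ + 6) / 9 + ((4 * ρ - 3) / 9) * γ - ((4 * ρ - 2) / 3) * x}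
      (if ρ ≤ 9 / 4 then 11 / 6 - 5 / (2 * (4 * ρ + 1))
        else 5 / 3 - 2 / (3 * (4 * ρ - 1))) := by
  split_ifs with hcase
  · have hA : (0:ℝ) < 4 * ρ + 1 := by linarith
    constructor
    · refine ⟨(8 * ρ - 3) / (2 * (4 * ρ + 1)), 1, ?_, ?_, le_refl 1, ?_, ?_, ?_⟩
      · apply div_nonneg (by linarith) (by positivity)
      · rw [div_le_one (by positivity)]; linarith
      · rw [← sub_nonneg]
        have hA' : (4 * ρ + 1) ≠ 0 := ne_of_gt hA
        field_simp
        nlinarith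
      · rw [← sub_nonneg]
        have hA' : (4 * ρ + 1) ≠ 0 := ne_of_gt hA
        field_simp
        nlinarith
      · rw [← sub_nonneg]
        have hA' : (4 * ρ + 1) ≠ 0 := ne_of_gt hA
        field_simp
        nlinarith
    · rintro y ⟨x, γ, hx, hxγ, hγ, h1, h2, h3⟩
      have key : (4 * ρ + 1) * y ≤ (22 * ρ - 2) / 3 := by
        nlinarith [mul_le_mul_of_nonneg_left h2 (show (0:ℝ) ≤ 4 * ρ - 2 by linarith)]
      have e : 11 / 6 - 5 / (2 * (4 * ρ + 1)) = (22 * ρ - 2) / (3 * (4 * ρ + 1)) := by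
        field_simp; ring
      rw [e, le_div_iff₀ (by positivity)]
      nlinarith [key]
  · push_neg at hcase
    have hB : (0:ℝ) < 4 * ρ - 1 := by linarith
    constructor
    · refine ⟨(4 * ρ - 3) / (4 * ρ - 1), 1, ?_, ?_, le_refl 1, ?_, ?_, ?_⟩
      · apply div_nonneg (by linarith) (by linarith)
      · rw [div_le_one hB]; linarith
      · rw [← sub_nonneg]
        have hB' : (4 * ρ - 1) ≠ 0 := ne_of_gt hB
        field_simp
        nlinarith
      · rw [← sub_nonneg]
        have hB' : (4 * ρ - 1) ≠ 0 := ne_of_gt hB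
        field_simp
        nlinarith
      · rw [← sub_nonneg]
        have hB' : (4 * ρ - 1) ≠ 0 := ne_of_gt hB
        field_simp
        have hB'' : ρ * 4 - 1 ≠ 0 := ne_of_gt (by linarith)
        field_simp
        rw [zero_mul, zero_mul]
        apply div_nonneg _ (by linarith)
        nlinarith
    · rintro y ⟨x, γ, hx, hxγ, hγ, h1, h2, h3⟩
      have key : (4 * ρ - 1) * y ≤ (20 * ρ - 7) / 3 := by
        nlinarith [mul_le_mul_of_nonneg_left h1 (show (0:ℝ) ≤ 4 * ρ - 2 by linarith)]
      have e : 5 / 3 - 2 / (3 * (4 * ρ - 1)) = (20 * ρ - 7) / (3 * (4 * ρ - 1)) := by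
        field_simp; ring
      rw [e, le_div_iff₀ (by positivity)]
      nlinarith [key]
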